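/- Define r(n) by r(1)=1, r(2)=2, and r(n+1) = r(n) + 2·r(n-1) + 1 for n ≥ 2. Then r(n) equals the number of lists of length n+1 over the three nonzero elements {1,2,3} of Z/2 × Z/2 that are non-constant, sum to 1, and have no proper nonempty prefix summing to 3. -/

import Mathlib

/-- The color `1 = (0,1)` of `Z/2 × Z/2`. -/
def col1 : ZMod 2 × ZMod 2 := (0, 1)

/-- The color `3 = (1,1)` of `Z/2 × Z/2`. -/
def col3 : ZMod 2 × ZMod 2 := (1, 1)

namespace RseqAux

abbrev G := ZMod 2 × ZMod 2

def col2 : G := (1, 0)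

open Finset

lemma add_self (c : G) : c + c = 0 := by revert c; decide

lemma nsmul_G (k : ℕ) (c : G) : k • c = if Even k then 0 else c := by
  induction k with
  | zero => simp
  | succ k ih =>
    rw [succ_nsmul, ih]
    by_cases h : Even k
    · simp [h, Nat.even_add_one]
    · simp [h, Nat.even_add_one, add_self]

lemma filter_lt_succ (n k : ℕ) (hk : k < n + 1) :
    univ.filter (fun j : Fin (n+1) => (j:ℕ) < k + 1)
      = insert ⟨k, hk⟩ (univ.filter fun j : Fin (n+1) => (j:ℕ) < k) := by
  ext j
  simp [Fin.ext_iff]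
  omega

lemma sum_step (n : ℕ) (v : Fin (n+1) → G) (k : ℕ) (hk : k < n + 1) :
    ∑ j ∈ univ.filter (fun j : Fin (n+1) => (j:ℕ) < k + 1), v j
      = v ⟨k, hk⟩ + ∑ j ∈ univ.filter (fun j : Fin (n+1) => (j:ℕ) < k), v j := by
  rw [filter_lt_succ n k hk, Finset.sum_insert (by simp)]

lemma filter_lt_top (n : ℕ) :
    univ.filter (fun j : Fin (n+1) => (j:ℕ) < n + 1) = univ := by
  apply filter_true_of_mem
  intro j _
  exact j.isLt

lemma partial_sum (n : ℕ) (s : Fin (n+2) → G) (k : ℕ) (hk : k < n + 2) :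
    ∑ j ∈ univ.filter (fun j : Fin (n+1) => (j:ℕ) < k),
        (s (Fin.succ j) - s (Fin.castSucc j))
      = s ⟨k, hk⟩ - s 0 := by
  induction k with
  | zero =>
    have : univ.filter (fun j : Fin (n+1) => (j:ℕ) < 0) = ∅ := by simp
    rw [this]
    simp
  | succ k ih =>
    have hk' : k < n + 1 := by omega
    rw [sum_step n _ k hk', ih (by omega)]
    have h1 : Fin.succ (⟨k, hk'⟩ : Fin (n+1)) = ⟨k+1, hk⟩ := rfl
    have h2 : Fin.castSucc (⟨k, hk'⟩ : Fin (n+1)) = ⟨k, by omega⟩ := rfl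
    rw [h1, h2]
    abel

lemma const_partial (n : ℕ) (c : G) (k : ℕ) (hk : k ≤ n + 1) :
    ∑ _j ∈ univ.filter (fun j : Fin (n+1) => (j:ℕ) < k), c = k • c := by
  induction k with
  | zero => simp
  | succ k ih =>
    rw [sum_step n (fun _ => c) k (by omega), ih (by omega), succ_nsmul, add_comm]

/-! ### Walks -/

def Wset (m : ℕ) (x : G) : Finset (Fin (m+1) → G) :=
  univ.filter fun s =>
    s 0 = 0 ∧ s (Fin.last m) = x ∧ (∀ i : Fin m, s i.succ ≠ s i.castSucc) ∧ ∀ i, s i ≠ col3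

lemma step (m : ℕ) (x : G) (hx : x ≠ col3) :
    (Wset (m+1) x).card
      = ∑ y ∈ univ.filter (fun y : G => y ≠ x ∧ y ≠ col3), (Wset m y).card := by
  rw [← Finset.card_sigma]
  apply Finset.card_nbij'
    (i := fun s => (⟨s (Fin.castSucc (Fin.last m)), Fin.init s⟩ :
      (y : G) × (Fin (m+1) → G)))
    (j := fun p => Fin.snoc p.2 x)
  case hi =>
    rintro s hs
    simp only [Wset, mem_coe, mem_filter, mem_univ, true_and] at hs
    obtain ⟨h0, hlast, hstep, h3⟩ := hs
    simp only [mem_coe, mem_sigma, mem_filter, mem_univ, true_and, Wset]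
    refine ⟨⟨?_, h3 _⟩, ?_, rfl, ?_, ?_⟩
    · intro h
      have := hstep (Fin.last m)
      rw [Fin.succ_last, hlast] at this
      exact this h.symm
    · show s (Fin.castSucc 0) = 0
      simpa using h0
    · intro i
      have := hstep i.castSucc
      rw [Fin.succ_castSucc] at this
      exact this
    · intro i
      exact h3 _
  case hj =>
    rintro ⟨y, t⟩ hp
    simp only [mem_coe, mem_sigma, mem_filter, mem_univ, true_and, Wset] at hp
    obtain ⟨⟨hyx, hy3⟩, h0, hlast, hstep, h3⟩ := hp
    simp only [Wset, mem_coe, mem_filter, mem_univ, true_and]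
    refine ⟨?_, ?_, ?_, ?_⟩
    · have h : (0 : Fin (m+2)) = Fin.castSucc 0 := rfl
      rw [h, Fin.snoc_castSucc]
      exact h0
    · simp [Fin.snoc_last]
    · intro i
      induction i using Fin.lastCases with
      | last =>
        rw [Fin.succ_last, Fin.snoc_last, Fin.snoc_castSucc, hlast]
        exact fun h => hyx h.symm
      | cast j =>
        rw [Fin.succ_castSucc, Fin.snoc_castSucc, Fin.snoc_castSucc]
        exact hstep j
    · intro i
      induction i using Fin.lastCases with
      | last => rw [Fin.snoc_last]; exact hx
      | cast j => rw [Fin.snoc_castSucc]; exact h3 j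
  case left_inv =>
    intro s hs
    simp only [Wset, mem_coe, mem_filter, mem_univ, true_and] at hs
    calc Fin.snoc (Fin.init s) x = Fin.snoc (Fin.init s) (s (Fin.last (m+1))) := by
          rw [hs.2.1]
      _ = s := Fin.snoc_init_self s
  case right_inv =>
    rintro ⟨y, t⟩ hp
    simp only [mem_coe, mem_sigma, mem_filter, mem_univ, true_and, Wset] at hp
    have h1 : (Fin.snoc t x : Fin (m+2) → G) (Fin.castSucc (Fin.last m)) = y := by
      rw [Fin.snoc_castSucc]; exact hp.2.2.1
    have h2 : Fin.init (Fin.snoc t x : Fin (m+2) → G) = t := by simp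
    simp only [h1, h2]

lemma card_swap (m : ℕ) : (Wset m col1).card = (Wset m col2).card := by
  apply Finset.card_nbij' (i := fun s => Prod.swap ∘ s) (j := fun s => Prod.swap ∘ s)
  case hi =>
    intro s hs
    simp only [Wset, mem_coe, mem_filter, mem_univ, true_and] at hs ⊢
    obtain ⟨h0, hlast, hstep, h3⟩ := hs
    refine ⟨by simp [Function.comp, h0, Prod.swap], by simp [Function.comp, hlast]; rfl, ?_, ?_⟩
    · intro i h
      exact hstep i (Prod.swap_injective (by simpa using h))
    · intro i h
      apply h3 i
      have : s i = Prod.swap col3 := by rw [← h]; simp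
      exact this
  case hj =>
    intro s hs
    simp only [Wset, mem_coe, mem_filter, mem_univ, true_and] at hs ⊢
    obtain ⟨h0, hlast, hstep, h3⟩ := hs
    refine ⟨by simp [Function.comp, h0, Prod.swap], by simp [Function.comp, hlast]; rfl, ?_, ?_⟩
    · intro i h
      exact hstep i (Prod.swap_injective (by simpa using h))
    · intro i h
      apply h3 i
      have : s i = Prod.swap col3 := by rw [← h]; simp
      exact this
  case left_inv => intro s _; funext i; simp
  case right_inv => intro s _; funext i; simp

lemma W0_zero : (Wset 0 (0:G)).card = 1 := by decide
lemma W0_one : (Wset 0 col1).card = 0 := by decide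
lemma W1_one : (Wset 1 col1).card = 1 := by decide

lemma filt1 : univ.filter (fun y : G => y ≠ col1 ∧ y ≠ col3) = {(0,0), col2} := by decide
lemma filt0 : univ.filter (fun y : G => y ≠ (0:G) ∧ y ≠ col3) = {col1, col2} := by decide
lemma filt2 : univ.filter (fun y : G => y ≠ col2 ∧ y ≠ col3) = {(0,0), col1} := by decide

lemma Bstep (m : ℕ) :
    (Wset (m+1) col1).card = (Wset m 0).card + (Wset m col2).card := by
  rw [step m col1 (by decide), filt1, Finset.sum_pair (by decide)]
  rfl

lemma Astep (m : ℕ) :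
    (Wset (m+1) (0:G)).card = (Wset m col1).card + (Wset m col2).card := by
  rw [step m 0 (by decide), filt0, Finset.sum_pair (by decide)]

lemma Cstep (m : ℕ) :
    (Wset (m+1) col2).card = (Wset m 0).card + (Wset m col1).card := by
  rw [step m col2 (by decide), filt2, Finset.sum_pair (by decide)]
  rfl

lemma Brec (m : ℕ) :
    (Wset (m+2) col1).card = (Wset (m+1) col1).card + 2 * (Wset m col1).card := by
  rw [Bstep (m+1), Astep m, Cstep m, Bstep m, ← card_swap m]
  ring

lemma W2_one : (Wset 2 col1).card = 1 := by
  rw [Brec 0, W1_one, W0_one]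

lemma W3_one : (Wset 3 col1).card = 3 := by
  rw [Brec 1, W2_one, W1_one]

/-! ### The vector sets -/

def Pset (n : ℕ) : Finset (Fin (n+1) → G) :=
  univ.filter fun v => (∀ j, v j ≠ 0) ∧ (∑ j, v j) = col1 ∧
    ∀ k : ℕ, 1 ≤ k → k ≤ n →
      (∑ j ∈ univ.filter (fun j : Fin (n+1) => (j:ℕ) < k), v j) ≠ col3

lemma P_card (n : ℕ) : (Pset n).card = (Wset (n+1) col1).card := by
  apply Finset.card_nbij'
    (i := fun v => fun k : Fin (n+2) =>
      ∑ j ∈ univ.filter (fun j : Fin (n+1) => (j:ℕ) < (k:ℕ)), v j)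
    (j := fun s => fun j : Fin (n+1) => s j.succ - s j.castSucc)
  case hi =>
    intro v hv
    simp only [Pset, mem_coe, mem_filter, mem_univ, true_and] at hv
    obtain ⟨hv0, hsum, hpre⟩ := hv
    simp only [Wset, mem_coe, mem_filter, mem_univ, true_and]
    refine ⟨?_, ?_, ?_, ?_⟩
    · have : univ.filter (fun j : Fin (n+1) => (j:ℕ) < ((0 : Fin (n+2)):ℕ)) = ∅ := by
        simp
      rw [this, Finset.sum_empty]
    · have : ((Fin.last (n+1) : Fin (n+2)) : ℕ) = n + 1 := rfl
      rw [this, filter_lt_top n, hsum]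
    · intro i h
      have hs := sum_step n v i i.isLt
      rw [show ((Fin.succ i : Fin (n+2)) : ℕ) = (i:ℕ) + 1 from Fin.val_succ i,
        show ((Fin.castSucc i : Fin (n+2)) : ℕ) = (i:ℕ) from rfl] at h
      rw [hs] at h
      simp only [Fin.eta] at h
      exact hv0 i (by simpa using h)
    · intro k hk
      rcases Nat.eq_zero_or_pos (k:ℕ) with h0 | h1
      · have he : univ.filter (fun j : Fin (n+1) => (j:ℕ) < (k:ℕ)) = ∅ := by
          simp [h0]
        rw [he, Finset.sum_empty] at hk
        exact absurd hk (by decide)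
      · rcases Nat.lt_or_ge (k:ℕ) (n+1) with hlt | hge
        · exact hpre k h1 (by omega) hk
        · have he : (k:ℕ) = n + 1 := by have := k.isLt; omega
          rw [he, filter_lt_top n, hsum] at hk
          exact absurd hk (by decide)
  case hj =>
    intro s hs
    simp only [Wset, mem_coe, mem_filter, mem_univ, true_and] at hs
    obtain ⟨h0, hlast, hstep, h3⟩ := hs
    simp only [Pset, mem_coe, mem_filter, mem_univ, true_and]
    refine ⟨?_, ?_, ?_⟩
    · intro j h
      exact hstep j (sub_eq_zero.mp h)
    · rw [← filter_lt_top n]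
      rw [partial_sum n s (n+1) (by omega), h0, sub_zero]
      exact hlast
    · intro k hk1 hkn
      rw [partial_sum n s k (by omega), h0, sub_zero]
      exact h3 _
  case left_inv =>
    intro v hv
    funext j
    have hs := sum_step n v j j.isLt
    simp only [Fin.val_succ, Fin.coe_castSucc]
    rw [hs]
    simp [Fin.eta]
  case right_inv =>
    intro s hs
    simp only [Wset, mem_coe, mem_filter, mem_univ, true_and] at hs
    funext k
    beta_reduce
    rw [partial_sum n s k k.isLt]
    simp [Fin.eta, hs.1]

/-! ### Constant vectors -/

lemma const_count (n : ℕ) :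
    ((Pset n).filter (fun v => ¬ ∃ j k, v j ≠ v k)).card
      = if Even n then 1 else 0 := by
  by_cases hev : Even n
  · rw [if_pos hev]
    have : (Pset n).filter (fun v => ¬ ∃ j k, v j ≠ v k)
        = {fun _ => col1} := by
      ext v
      simp only [mem_filter, mem_singleton, Pset, mem_univ, true_and]
      constructor
      · rintro ⟨⟨hv0, hsum, hpre⟩, hc⟩
        push_neg at hc
        have hvc : v = fun _ => v 0 := funext fun j => hc j 0
        have hs : (∑ j, v j) = (n+1) • v 0 := by
          rw [hvc]
          simp [Finset.sum_const, Finset.card_univ]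
        rw [hs, nsmul_G] at hsum
        have hodd : ¬ Even (n+1) := by simpa [Nat.even_add_one] using hev
        rw [if_neg hodd] at hsum
        rw [hvc, hsum]
      · rintro rfl
        refine ⟨⟨?_, ?_, ?_⟩, ?_⟩
        · intro j
          show col1 ≠ (0 : G)
          decide
        · have : (∑ _j : Fin (n+1), col1) = (n+1) • col1 := by
            simp [Finset.sum_const, Finset.card_univ]
          rw [this, nsmul_G]
          have hodd : ¬ Even (n+1) := by simpa [Nat.even_add_one] using hev
          rw [if_neg hodd]
        · intro k hk1 hkn h
          rw [const_partial n col1 k (by omega), nsmul_G] at h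
          by_cases h2 : Even k
          · rw [if_pos h2] at h; exact absurd h (by decide)
          · rw [if_neg h2] at h; exact absurd h (by decide)
        · push_neg
          intro j k
          rfl
    rw [this, Finset.card_singleton]
  · rw [if_neg hev]
    have : (Pset n).filter (fun v => ¬ ∃ j k, v j ≠ v k) = ∅ := by
      ext v
      simp only [mem_filter, Pset, mem_univ, true_and, Finset.notMem_empty, iff_false]
      rintro ⟨⟨hv0, hsum, hpre⟩, hc⟩
      push_neg at hc
      have hvc : v = fun _ => v 0 := funext fun j => hc j 0
      have hs : (∑ j, v j) = (n+1) • v 0 := by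
        rw [hvc]
        simp [Finset.sum_const, Finset.card_univ]
      rw [hs, nsmul_G] at hsum
      have he : Even (n+1) := by simpa [Nat.even_add_one] using hev
      rw [if_pos he] at hsum
      exact absurd hsum (by decide)
    rw [this, Finset.card_empty]

end RseqAux

/-- If `r(1)=1`, `r(2)=2` and `r(n+1)=r(n)+2r(n-1)+1` for `n ≥ 2`, then for
`n ≥ 1`, `r(n)` counts the vectors of length `n+1` over the three nonzero
elements of `Z/2 × Z/2` that are non-constant, sum to `1`, and have no
proper nonempty prefix summing to `3`. -/
theorem rseq_counts_positive_rigid_vectors (r : ℕ → ℕ)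
    (h1 : r 1 = 1) (h2 : r 2 = 2)
    (hrec : ∀ n, 2 ≤ n → r (n + 1) = r n + 2 * r (n - 1) + 1) :
    ∀ n, 1 ≤ n →
      r n =
        Nat.card {v : Fin (n + 1) → ZMod 2 × ZMod 2 //
          (∀ j, v j ≠ 0) ∧
          (∃ j k, v j ≠ v k) ∧
          (∑ j, v j) = col1 ∧
          (∀ k : ℕ, 1 ≤ k → k ≤ n →
            (∑ j ∈ Finset.univ.filter (fun j : Fin (n + 1) => (j : ℕ) < k),
              v j) ≠ col3)} := by
  open RseqAux Finset in
  -- numeric recurrence for walk counts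
  have key : ∀ m : ℕ,
      (Wset (m+2) col1).card = r (m+1) + (if Even (m+1) then 1 else 0) ∧
      (Wset (m+3) col1).card = r (m+2) + (if Even (m+2) then 1 else 0) := by
    intro m
    induction m with
    | zero =>
      constructor
      · rw [W2_one, h1]
        simp [Nat.even_add_one]
      · rw [W3_one, h2]
        simp
    | succ m ih =>
      obtain ⟨ihA, ihB⟩ := ih
      refine ⟨ihB, ?_⟩
      have hB : (Wset (m+4) col1).card
          = (Wset (m+3) col1).card + 2 * (Wset (m+2) col1).card := Brec (m+2)
      rw [hB, ihA, ihB]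
      have hr : r (m+3) = r (m+2) + 2 * r (m+1) + 1 := by
        have := hrec (m+2) (by omega)
        simpa using this
      rw [show m + 1 + 2 = m + 3 by ring, hr]
      rcases Nat.even_or_odd m with h | h
      · have e1 : ¬ Even (m+1) := by simp [Nat.even_add_one, h]
        have e2 : Even (m+2) := by simp [Nat.even_add_one, e1]
        have e3 : ¬ Even (m+3) := by simp [Nat.even_add_one, e2]
        rw [if_neg e1, if_pos e2, if_neg e3]
        ring
      · have e1 : Even (m+1) := by simpa [Nat.even_add_one, Nat.not_even_iff_odd] using h
        have e2 : ¬ Even (m+2) := by simp [Nat.even_add_one, e1]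
        have e3 : Even (m+3) := by simp [Nat.even_add_one, e2]
        rw [if_pos e1, if_neg e2, if_pos e3]
        ring
  intro n hn
  obtain ⟨m, rfl⟩ : ∃ m, n = m + 1 := ⟨n - 1, by omega⟩
  set p : (Fin (m + 2) → ZMod 2 × ZMod 2) → Prop := fun v =>
    (∀ j, v j ≠ 0) ∧
    (∃ j k, v j ≠ v k) ∧
    (∑ j, v j) = col1 ∧
    (∀ k : ℕ, 1 ≤ k → k ≤ m + 1 →
      (∑ j ∈ Finset.univ.filter (fun j : Fin (m + 2) => (j : ℕ) < k),
        v j) ≠ col3) with hp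
  have hcard : Nat.card {v : Fin (m + 2) → ZMod 2 × ZMod 2 // p v}
      = (univ.filter p).card := by
    rw [Nat.card_eq_fintype_card, Fintype.card_subtype]
  have hQ : univ.filter p = (Pset (m+1)).filter (fun v => ∃ j k, v j ≠ v k) := by
    ext v
    simp only [hp, Pset, mem_filter, mem_univ, true_and]
    tauto
  have hsplit :
      ((Pset (m+1)).filter (fun v => ∃ j k, v j ≠ v k)).card
        + ((Pset (m+1)).filter (fun v => ¬ ∃ j k, v j ≠ v k)).card
      = (Pset (m+1)).card :=
    Finset.card_filter_add_card_filter_not _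
  have hW : (Pset (m+1)).card = r (m+1) + (if Even (m+1) then 1 else 0) := by
    rw [P_card, show m + 1 + 1 = m + 2 by ring, (key m).1]
  rw [hcard, hQ]
  have hc := const_count (m+1)
  generalize hA : ((Pset (m+1)).filter (fun v => ∃ j k, v j ≠ v k)).card = A at hsplit ⊢
  generalize hB : ((Pset (m+1)).filter (fun v => ¬ ∃ j k, v j ≠ v k)).card = B at hsplit hc
  generalize hC : (Pset (m+1)).card = C at hsplit hW
  clear hcard hQ hp hA hB hC key hrec
  clear p
  by_cases he : Even (m+1)
  · rw [if_pos he] at hW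
    rw [if_pos he] at hc
    omega
  · rw [if_neg he] at hW
    rw [if_neg he] at hc
    omega
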